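/- For a positive semidefinite real symmetric N×N matrix A and integer n ≥ 1, tr(A^n) ≥ Σ_{a=1}^N (A_{aa})^n. -/
import Mathlib

theorem trace_pow_ge_sum_diag_pow (N n : ℕ) (hn : 1 ≤ n)
    (A : Matrix (Fin N) (Fin N) ℝ) (hA : A.PosSemidef) :
    (A ^ n).trace ≥ ∑ a, (A a a) ^ n := by
  classical
  have hH := hA.1
  set U : Matrix (Fin N) (Fin N) ℝ := (hH.eigenvectorUnitary : Matrix (Fin N) (Fin N) ℝ) with hU
  set lam := hH.eigenvalues with hlam
  set D : Matrix (Fin N) (Fin N) ℝ := Matrix.diagonal ((RCLike.ofReal : ℝ → ℝ) ∘ lam) with hD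
  have hUs : U * star U = 1 := Matrix.mem_unitaryGroup_iff.mp hH.eigenvectorUnitary.2
  have hsU : star U * U = 1 := Matrix.mem_unitaryGroup_iff'.mp hH.eigenvectorUnitary.2
  have hspec : A = U * D * star U := hH.spectral_theorem
  have hpow : A ^ n = U * D ^ n * star U := by
    clear hn
    induction n with
    | zero => simpa using hUs.symm
    | succ k ih =>
      rw [pow_succ, ih, hspec]
      simp only [Matrix.mul_assoc]
      rw [show star U * (U * (D * star U)) = D * star U from by
        rw [← Matrix.mul_assoc, hsU, Matrix.one_mul], pow_succ]
      simp [Matrix.mul_assoc]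
  -- trace of A^n is sum of λ_i ^ n
  have htrace : (A ^ n).trace = ∑ i, lam i ^ n := by
    rw [hpow, Matrix.trace_mul_cycle, hsU, Matrix.one_mul]
    rw [hD, Matrix.diagonal_pow, Matrix.trace_diagonal]
    simp
  -- diagonal entries
  have hdiag : ∀ a, A a a = ∑ i, (U a i)^2 * lam i := by
    intro a
    rw [hspec, Matrix.mul_apply]
    simp only [Matrix.mul_diagonal, hD, Matrix.star_apply, Matrix.conjTranspose_apply,
      Function.comp_apply, RCLike.ofReal_real_eq_id, id_eq, star_trivial]
    exact Finset.sum_congr rfl (fun i _ => by ring)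
  have hrow : ∀ a, ∑ i, (U a i)^2 = 1 := by
    intro a
    have := congrArg (fun M => M a a) hUs
    simpa [Matrix.mul_apply, Matrix.one_apply, Matrix.conjTranspose_apply, sq] using this
  have hcol : ∀ i, ∑ a, (U a i)^2 = 1 := by
    intro i
    have := congrArg (fun M => M i i) hsU
    simpa [Matrix.mul_apply, Matrix.one_apply, Matrix.conjTranspose_apply, sq] using this
  have hlamnn : ∀ i, 0 ≤ lam i := fun i => hA.eigenvalues_nonneg i
  have key : ∀ a, (A a a) ^ n ≤ ∑ i, (U a i)^2 * lam i ^ n := by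
    intro a
    rw [hdiag a]
    exact Real.pow_arith_mean_le_arith_mean_pow Finset.univ (fun i => (U a i)^2) lam
      (fun i _ => sq_nonneg _) (hrow a) (fun i _ => hlamnn i) n
  calc ∑ a, (A a a) ^ n ≤ ∑ a, ∑ i, (U a i)^2 * lam i ^ n :=
        Finset.sum_le_sum (fun a _ => key a)
    _ = ∑ i, (∑ a, (U a i)^2) * lam i ^ n := by
        rw [Finset.sum_comm]; simp [Finset.sum_mul]
    _ = (A ^ n).trace := by simp [hcol, htrace]
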